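/- Let u_0 = 0, u_1, ..., u_{N-1} be the permutation of {0,1,...,N-1} such that {u_0 α} < {u_1 α} < ... < {u_{N-1} α}. Then N is a relabeling time (i.e., there are only two distinct gap lengths) if and only if N = u_1 + u_{N-1}. -/

import Mathlib

/-- The cyclic gap after the point `{m α}` among the points `{0α}, …, {(N-1)α}` on ℝ/ℤ:
the infimum of positive circular distances from `{m α}` to the other points. -/
noncomputable def gapAt (α : ℝ) (N : ℕ) (m : ℕ) : ℝ :=
  sInf {d : ℝ | 0 < d ∧ ∃ m' : ℕ, m' < N ∧ Int.fract ((m' : ℝ) * α - (m : ℝ) * α) = d}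

open Classical in
/-- The set of distinct cyclic gap lengths of the configuration `{0α}, …, {(N-1)α}`. -/
noncomputable def gapSet (α : ℝ) (N : ℕ) : Finset ℝ :=
  (Finset.range N).image (gapAt α N)

/-- The multiset of cyclic gaps of the configuration `{0α}, …, {(N-1)α}`. -/
noncomputable def gapMult (α : ℝ) (N : ℕ) : Multiset ℝ :=
  (Multiset.range N).map (gapAt α N)

/-- Cyclic extension of the ordering permutation `u` to integer indices, mod `N`. -/
def uc (N : ℕ) (u : ℕ → ℕ) (j : ℤ) : ℕ := u ((j % (N : ℤ)).toNat)


section ThreeGap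

variable {α : ℝ} {N a b : ℕ}

private lemma fract_addf (x y : ℝ) :
    Int.fract (x + y) = Int.fract (Int.fract x + Int.fract y) := by
  conv_lhs => rw [show x + y = Int.fract x + Int.fract y + ((⌊x⌋ + ⌊y⌋ : ℤ) : ℝ) by
    unfold Int.fract; push_cast; ring]
  rw [Int.fract_add_intCast]

private lemma fract_subf (x y : ℝ) :
    Int.fract (x - y) = Int.fract (Int.fract x - Int.fract y) := by
  conv_lhs => rw [show x - y = Int.fract x - Int.fract y + ((⌊x⌋ - ⌊y⌋ : ℤ) : ℝ) by
    unfold Int.fract; push_cast; ring]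
  rw [Int.fract_add_intCast]

private lemma fract_of_one_le {s : ℝ} (h1 : 1 ≤ s) (h2 : s < 2) : Int.fract s = s - 1 := by
  rw [show s = (s - 1) + ((1 : ℤ) : ℝ) by push_cast; ring, Int.fract_add_intCast]
  rw [Int.fract_eq_self.mpr ⟨by linarith, by linarith⟩]
  push_cast; ring

private lemma fract_of_neg' {s : ℝ} (h1 : -1 ≤ s) (h2 : s < 0) : Int.fract s = s + 1 := by
  rw [show s = (s + 1) + ((-1 : ℤ) : ℝ) by push_cast; ring, Int.fract_add_intCast]
  rw [Int.fract_eq_self.mpr ⟨by linarith, by linarith⟩]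
  push_cast; ring

private lemma fract_int_pos (hα : Irrational α) {k : ℤ} (hk : k ≠ 0) :
    0 < Int.fract ((k : ℝ) * α) := by
  rcases (Int.fract_nonneg ((k : ℝ) * α)).lt_or_eq with h | h
  · exact h
  · exfalso
    have h2 : (k : ℝ) * α = (⌊(k : ℝ) * α⌋ : ℝ) := by
      have := h.symm
      rw [Int.fract] at this
      linarith
    exact (hα.intCast_mul hk).ne_int _ h2

private lemma fract_nat_pos (hα : Irrational α) {d : ℕ} (hd : d ≠ 0) :
    0 < Int.fract ((d : ℝ) * α) := by
  have := fract_int_pos hα (k := (d : ℤ)) (by exact_mod_cast hd)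
  simpa using this

private lemma fract_nat_ne (hα : Irrational α) {p q : ℕ} (h : p ≠ q) :
    Int.fract ((p : ℝ) * α) ≠ Int.fract ((q : ℝ) * α) := by
  intro he
  obtain ⟨z, hz⟩ := Int.fract_eq_fract.mp he
  have h1 : (((p : ℤ) - q : ℤ) : ℝ) * α = (z : ℝ) := by push_cast; push_cast at hz; linarith
  exact (hα.intCast_mul (sub_ne_zero.mpr (by exact_mod_cast h : (p:ℤ) ≠ (q:ℤ)))).ne_int z h1

private lemma fract_nat_add_lt (hα : Irrational α) (p q : ℕ)
    (h : Int.fract ((p : ℝ) * α) + Int.fract ((q : ℝ) * α) < 1) :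
    Int.fract (((p + q : ℕ) : ℝ) * α) = Int.fract ((p : ℝ) * α) + Int.fract ((q : ℝ) * α) := by
  have hc : ((p + q : ℕ) : ℝ) * α = (p : ℝ) * α + (q : ℝ) * α := by push_cast; ring
  rw [hc, fract_addf]
  exact Int.fract_eq_self.mpr ⟨add_nonneg (Int.fract_nonneg _) (Int.fract_nonneg _), h⟩

private lemma fract_nat_add_ge (hα : Irrational α) (p q : ℕ)
    (h : 1 ≤ Int.fract ((p : ℝ) * α) + Int.fract ((q : ℝ) * α)) :
    Int.fract (((p + q : ℕ) : ℝ) * α)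
      = Int.fract ((p : ℝ) * α) + Int.fract ((q : ℝ) * α) - 1 := by
  have hc : ((p + q : ℕ) : ℝ) * α = (p : ℝ) * α + (q : ℝ) * α := by push_cast; ring
  rw [hc, fract_addf]
  have h2 : Int.fract ((p : ℝ) * α) < 1 := Int.fract_lt_one _
  have h3 : Int.fract ((q : ℝ) * α) < 1 := Int.fract_lt_one _
  exact fract_of_one_le h (by linarith)

private lemma fract_nat_sub_lt (hα : Irrational α) {p q : ℕ} (hqp : q ≤ p)
    (h : Int.fract ((q : ℝ) * α) < Int.fract ((p : ℝ) * α)) :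
    Int.fract (((p - q : ℕ) : ℝ) * α)
      = Int.fract ((p : ℝ) * α) - Int.fract ((q : ℝ) * α) := by
  have hc : ((p - q : ℕ) : ℝ) * α = (p : ℝ) * α - (q : ℝ) * α := by
    push_cast [hqp]; ring
  rw [hc, fract_subf]
  exact Int.fract_eq_self.mpr ⟨by linarith, by linarith [Int.fract_lt_one ((p:ℝ)*α), Int.fract_nonneg ((q:ℝ)*α)]⟩

private lemma fract_nat_sub_gt (hα : Irrational α) {p q : ℕ} (hqp : q ≤ p)
    (h : Int.fract ((p : ℝ) * α) < Int.fract ((q : ℝ) * α)) :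
    Int.fract (((p - q : ℕ) : ℝ) * α)
      = Int.fract ((p : ℝ) * α) - Int.fract ((q : ℝ) * α) + 1 := by
  have hc : ((p - q : ℕ) : ℝ) * α = (p : ℝ) * α - (q : ℝ) * α := by
    push_cast [hqp]; ring
  rw [hc, fract_subf]
  exact fract_of_neg' (by linarith [Int.fract_lt_one ((q:ℝ)*α), Int.fract_nonneg ((p:ℝ)*α)]) (by linarith)

private lemma fract_diff_gt {m m' : ℕ} (h : m < m') :
    Int.fract ((m' : ℝ) * α - (m : ℝ) * α) = Int.fract (((m' - m : ℕ) : ℝ) * α) := by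
  congr 1
  push_cast [h.le]; ring

private lemma fract_diff_lt (hα : Irrational α) {m m' : ℕ} (h : m' < m) :
    Int.fract ((m' : ℝ) * α - (m : ℝ) * α) = 1 - Int.fract (((m - m' : ℕ) : ℝ) * α) := by
  have h1 : (m' : ℝ) * α - (m : ℝ) * α = -(((m - m' : ℕ) : ℝ) * α) := by
    push_cast [h.le]; ring
  rw [h1, Int.fract_neg (ne_of_gt (fract_nat_pos hα (by omega)))]


private lemma gap_eq {m : ℕ} {c : ℝ} (hc : 0 < c)
    (hmem : ∃ m' : ℕ, m' < N ∧ Int.fract ((m' : ℝ) * α - (m : ℝ) * α) = c)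
    (hlb : ∀ m' : ℕ, m' < N → 0 < Int.fract ((m' : ℝ) * α - (m : ℝ) * α) →
      c ≤ Int.fract ((m' : ℝ) * α - (m : ℝ) * α)) :
    gapAt α N m = c := by
  obtain ⟨m₀, hm₀, he₀⟩ := hmem
  have hmemS : c ∈ {d : ℝ | 0 < d ∧ ∃ m' : ℕ, m' < N ∧
      Int.fract ((m' : ℝ) * α - (m : ℝ) * α) = d} := ⟨hc, m₀, hm₀, he₀⟩
  refine le_antisymm (csInf_le ⟨0, fun d hd => le_of_lt hd.1⟩ hmemS) ?_
  refine le_csInf ⟨c, hmemS⟩ ?_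
  rintro d ⟨hd, m', hm', rfl⟩
  exact hlb m' hm' hd

variable (hα : Irrational α) (ha0 : a ≠ 0) (haN : a < N) (hb0 : b ≠ 0) (hbN : b < N)
  (hmin : ∀ m : ℕ, m ≠ 0 → m < N → Int.fract ((a : ℝ) * α) ≤ Int.fract ((m : ℝ) * α))
  (hmax : ∀ m : ℕ, m < N → Int.fract ((m : ℝ) * α) ≤ Int.fract ((b : ℝ) * α))

include hα ha0 haN hb0 hbN hmin hmax

private lemma ab_ge : N ≤ a + b := by
  by_contra hcon
  push_neg at hcon
  have h0a : 0 < Int.fract ((a : ℝ) * α) := fract_nat_pos hα ha0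
  have h0b : 0 < Int.fract ((b : ℝ) * α) := fract_nat_pos hα hb0
  rcases lt_or_ge (Int.fract ((a : ℝ) * α) + Int.fract ((b : ℝ) * α)) 1 with hs | hs
  · have he := fract_nat_add_lt hα a b hs
    have := hmax (a + b) (by omega)
    linarith
  · have he := fract_nat_add_ge hα a b hs
    have := hmin (a + b) (by omega) (by omega)
    have := Int.fract_lt_one ((b : ℝ) * α)
    linarith

private lemma gap1 {m : ℕ} (hm : m + a < N) :
    gapAt α N m = Int.fract ((a : ℝ) * α) := by
  apply gap_eq (fract_nat_pos hα ha0)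
  · refine ⟨m + a, hm, ?_⟩
    rw [fract_diff_gt (by omega : m < m + a), show m + a - m = a from by omega]
  · intro m' hm' hpos
    rcases lt_trichotomy m m' with h | h | h
    · rw [fract_diff_gt h]
      exact hmin (m' - m) (by omega) (by omega)
    · exfalso
      rw [← h, sub_self, Int.fract_zero] at hpos
      exact lt_irrefl 0 hpos
    · rw [fract_diff_lt hα h]
      set d := m - m' with hd
      by_contra hcon
      push_neg at hcon
      have hd0 : d ≠ 0 := by omega
      have hdlt : Int.fract ((d : ℝ) * α) < 1 := Int.fract_lt_one _
      have hge : 1 ≤ Int.fract ((d : ℝ) * α) + Int.fract ((a : ℝ) * α) := by linarith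
      have he := fract_nat_add_ge hα d a hge
      have := hmin (d + a) (by omega) (by omega)
      linarith

private lemma gap2 {m : ℕ} (hbm : b ≤ m) (hm : m < N) :
    gapAt α N m = 1 - Int.fract ((b : ℝ) * α) := by
  have hblt : Int.fract ((b : ℝ) * α) < 1 := Int.fract_lt_one _
  apply gap_eq (by linarith)
  · refine ⟨m - b, by omega, ?_⟩
    rw [fract_diff_lt hα (by omega : m - b < m), show m - (m - b) = b from by omega]
  · intro m' hm' hpos
    rcases lt_trichotomy m m' with h | h | h
    · rw [fract_diff_gt h]
      set d := m' - m with hd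
      by_contra hcon
      push_neg at hcon
      have h0d : 0 < Int.fract ((d : ℝ) * α) := fract_nat_pos hα (by omega)
      have hlt : Int.fract ((d : ℝ) * α) + Int.fract ((b : ℝ) * α) < 1 := by linarith
      have he := fract_nat_add_lt hα d b hlt
      have := hmax (d + b) (by omega)
      linarith
    · exfalso
      rw [← h, sub_self, Int.fract_zero] at hpos
      exact lt_irrefl 0 hpos
    · rw [fract_diff_lt hα h]
      have := hmax (m - m') (by omega)
      linarith

private lemma gap3 {m : ℕ} (hma : N ≤ m + a) (hmb : m < b) (hab : a ≠ b) :
    gapAt α N m = Int.fract ((a : ℝ) * α) + (1 - Int.fract ((b : ℝ) * α)) := by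
  have h0a : 0 < Int.fract ((a : ℝ) * α) := fract_nat_pos hα ha0
  have hblt : Int.fract ((b : ℝ) * α) < 1 := Int.fract_lt_one _
  have halt : Int.fract ((a : ℝ) * α) < 1 := Int.fract_lt_one _
  have haltb : Int.fract ((a : ℝ) * α) < Int.fract ((b : ℝ) * α) :=
    lt_of_le_of_ne (hmax a haN) (fract_nat_ne hα hab)
  apply gap_eq (by linarith)
  · -- witness m' = m + a - b
    rcases lt_or_ge a b with hab' | hab'
    · refine ⟨m + a - b, by omega, ?_⟩
      rw [fract_diff_lt hα (by omega : m + a - b < m)]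
      have hmm : m - (m + a - b) = b - a := by omega
      rw [hmm, fract_nat_sub_lt hα (by omega) haltb]
      ring
    · have hab'' : b < a := by omega
      refine ⟨m + a - b, by omega, ?_⟩
      rw [fract_diff_gt (by omega : m < m + a - b)]
      have hmm : m + a - b - m = a - b := by omega
      rw [hmm, fract_nat_sub_gt hα (by omega) haltb]
      ring
  · intro m' hm' hpos
    rcases lt_trichotomy m m' with h | h | h
    · rw [fract_diff_gt h]
      set d := m' - m with hd
      have hdlta : d < a := by omega
      have hda : Int.fract ((a : ℝ) * α) < Int.fract ((d : ℝ) * α) :=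
        lt_of_le_of_ne (hmin d (by omega) (by omega)) (fract_nat_ne hα (by omega)).symm
      by_contra hcon
      push_neg at hcon
      have he := fract_nat_sub_gt hα (le_of_lt hdlta) (by linarith :
        Int.fract ((a : ℝ) * α) < Int.fract ((d : ℝ) * α))
      -- wrong direction: we need fract((a - d)α), p = a, q = d, fract(aα) < fract(dα)
      have := hmax (a - d) (by omega)
      linarith
    · exfalso
      rw [← h, sub_self, Int.fract_zero] at hpos
      exact lt_irrefl 0 hpos
    · rw [fract_diff_lt hα h]
      set d := m - m' with hd
      have hdltb : d < b := by omega
      have hdb : Int.fract ((d : ℝ) * α) < Int.fract ((b : ℝ) * α) :=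
        lt_of_le_of_ne (hmax d (by omega)) (fract_nat_ne hα (by omega))
      by_contra hcon
      push_neg at hcon
      have he := fract_nat_sub_lt hα (le_of_lt hdltb) hdb
      have := hmin (b - d) (by omega) (by omega)
      linarith

end ThreeGap



theorem relabeling_iff (α : ℝ) (hα : Irrational α) (N : ℕ) (hN : 2 ≤ N)
    (u : ℕ → ℕ) (hbij : Set.BijOn u (Set.Iio N) (Set.Iio N))
    (hmono : StrictMonoOn (fun j => Int.fract ((u j : ℝ) * α)) (Set.Iio N)) :
    (gapSet α N).card = 2 ↔ N = u 1 + u (N - 1) := by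
  classical
  set a := u 1 with ha_def
  set b := u (N - 1) with hb_def
  have h1N : (1 : ℕ) < N := by omega
  have hN1 : N - 1 < N := by omega
  have h0N : (0 : ℕ) < N := by omega
  have haN : a < N := Set.mem_Iio.mp (hbij.mapsTo (Set.mem_Iio.mpr h1N))
  have hbN : b < N := Set.mem_Iio.mp (hbij.mapsTo (Set.mem_Iio.mpr hN1))
  have hu0 : u 0 = 0 := by
    obtain ⟨j, hj, hj0⟩ := hbij.surjOn (Set.mem_Iio.mpr h0N)
    rcases Nat.eq_zero_or_pos j with rfl | hjpos
    · exact hj0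
    · exfalso
      have h2 := hmono (Set.mem_Iio.mpr h0N) hj hjpos
      simp only [hj0, Nat.cast_zero, zero_mul, Int.fract_zero] at h2
      exact absurd h2 (not_lt.mpr (Int.fract_nonneg _))
  have ha0 : a ≠ 0 := by
    intro h
    have h2 := hbij.injOn (Set.mem_Iio.mpr h1N) (Set.mem_Iio.mpr h0N) (by rw [← ha_def, h, hu0])
    omega
  have hb0 : b ≠ 0 := by
    intro h
    have h2 := hbij.injOn (Set.mem_Iio.mpr hN1) (Set.mem_Iio.mpr h0N) (by rw [← hb_def, h, hu0])
    omega
  have hmin : ∀ m : ℕ, m ≠ 0 → m < N → Int.fract ((a : ℝ) * α) ≤ Int.fract ((m : ℝ) * α) := by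
    intro m hm0 hmN
    obtain ⟨j, hj, rfl⟩ := hbij.surjOn (Set.mem_Iio.mpr hmN)
    have hj1 : 1 ≤ j := by
      rcases Nat.eq_zero_or_pos j with rfl | h
      · exact absurd hu0 hm0
      · exact h
    exact hmono.monotoneOn (Set.mem_Iio.mpr h1N) hj hj1
  have hmax : ∀ m : ℕ, m < N → Int.fract ((m : ℝ) * α) ≤ Int.fract ((b : ℝ) * α) := by
    intro m hmN
    obtain ⟨j, hj, rfl⟩ := hbij.surjOn (Set.mem_Iio.mpr hmN)
    exact hmono.monotoneOn hj (Set.mem_Iio.mpr hN1)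
      (by have := Set.mem_Iio.mp hj; omega)
  have habN : N ≤ a + b := ab_ge hα ha0 haN hb0 hbN hmin hmax
  set δ1 := Int.fract ((a : ℝ) * α) with hδ1
  set δ2 := 1 - Int.fract ((b : ℝ) * α) with hδ2
  have h0a : 0 < δ1 := fract_nat_pos hα ha0
  have hblt : Int.fract ((b : ℝ) * α) < 1 := Int.fract_lt_one _
  have h0b2 : 0 < δ2 := by rw [hδ2]; linarith
  have hδne : δ1 ≠ δ2 := by
    intro h
    have hsum : Int.fract ((a : ℝ) * α) + Int.fract ((b : ℝ) * α) = 1 := by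
      rw [hδ1, hδ2] at h; linarith
    have he := fract_nat_add_ge hα a b (le_of_eq hsum.symm)
    rw [hsum] at he
    have hpos := fract_nat_pos hα (show a + b ≠ 0 by omega)
    rw [he] at hpos
    linarith
  constructor
  · intro hcard
    by_contra hne
    have hlt : N < a + b := lt_of_le_of_ne habN hne
    have hab : a ≠ b := by
      intro h
      have h1 := hbij.injOn (Set.mem_Iio.mpr h1N) (Set.mem_Iio.mpr hN1) h
      omega
    have g1 : gapAt α N 0 = δ1 := gap1 hα ha0 haN hb0 hbN hmin hmax (by omega)
    have g2 : gapAt α N b = δ2 := gap2 hα ha0 haN hb0 hbN hmin hmax le_rfl hbN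
    have g3 : gapAt α N (N - a) = δ1 + δ2 :=
      gap3 hα ha0 haN hb0 hbN hmin hmax (by omega) (by omega) hab
    have hsub : ({δ1, δ2, δ1 + δ2} : Finset ℝ) ⊆ gapSet α N := by
      intro x hx
      simp only [Finset.mem_insert, Finset.mem_singleton] at hx
      simp only [gapSet, Finset.mem_image, Finset.mem_range]
      rcases hx with rfl | rfl | rfl
      · exact ⟨0, h0N, g1⟩
      · exact ⟨b, hbN, g2⟩
      · exact ⟨N - a, by omega, g3⟩
    have h13 : δ1 ≠ δ1 + δ2 := by intro h; linarith
    have h23 : δ2 ≠ δ1 + δ2 := by intro h; linarith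
    have hcard3 : ({δ1, δ2, δ1 + δ2} : Finset ℝ).card = 3 := by
      rw [Finset.card_insert_of_notMem (by simp [hδne, h13]),
        Finset.card_insert_of_notMem (by simp [h23]), Finset.card_singleton]
    have := Finset.card_le_card hsub
    rw [hcard3, hcard] at this
    omega
  · intro hNab
    have hset : gapSet α N = {δ1, δ2} := by
      apply Finset.Subset.antisymm
      · intro x hx
        simp only [gapSet, Finset.mem_image, Finset.mem_range] at hx
        obtain ⟨m, hm, rfl⟩ := hx
        simp only [Finset.mem_insert, Finset.mem_singleton]
        rcases lt_or_ge (m + a) N with h | h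
        · left; exact gap1 hα ha0 haN hb0 hbN hmin hmax h
        · right; exact gap2 hα ha0 haN hb0 hbN hmin hmax (by omega) hm
      · intro x hx
        simp only [Finset.mem_insert, Finset.mem_singleton] at hx
        simp only [gapSet, Finset.mem_image, Finset.mem_range]
        rcases hx with rfl | rfl
        · exact ⟨0, h0N, gap1 hα ha0 haN hb0 hbN hmin hmax (by omega)⟩
        · exact ⟨b, hbN, gap2 hα ha0 haN hb0 hbN hmin hmax le_rfl hbN⟩
    rw [hset, Finset.card_insert_of_notMem (by simp [hδne]), Finset.card_singleton]
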